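/- Let K be a nonarchimedean field and let A be a Banach algebra over K whose underlying ring is Noetherian. Then every prime ideal of A is the kernel of some bounded multiplicative seminorm on A. -/

import Mathlib

open Filter Topology

section ClosedIdeal

variable (K : Type*) [NontriviallyNormedField K]
variable {R : Type*} [NormedCommRing R] [NormedAlgebra K R] [CompleteSpace R]

/-- The continuous linear map `(a i) ↦ ∑ i, a i * h i`. -/
noncomputable def combMap {n : ℕ} (h : Fin n → R) : (Fin n → R) →L[K] R :=
  LinearMap.mkContinuous
    { toFun := fun a => ∑ i, a i * h i
      map_add' := fun a b => by
        simp only [Pi.add_apply, add_mul]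
        rw [Finset.sum_add_distrib]
      map_smul' := fun c a => by
        simp only [Pi.smul_apply, RingHom.id_apply, Finset.smul_sum, smul_mul_assoc] }
    (∑ i, ‖h i‖)
    (fun a => by
      calc ‖∑ i, a i * h i‖ ≤ ∑ i, ‖a i * h i‖ := norm_sum_le _ _
        _ ≤ ∑ i, ‖h i‖ * ‖a‖ := by
            refine Finset.sum_le_sum fun i _ => ?_
            calc ‖a i * h i‖ ≤ ‖a i‖ * ‖h i‖ := norm_mul_le _ _
              _ ≤ ‖a‖ * ‖h i‖ := by
                  gcongr
                  exact norm_le_pi_norm a i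
              _ = ‖h i‖ * ‖a‖ := mul_comm _ _
        _ = (∑ i, ‖h i‖) * ‖a‖ := by rw [Finset.sum_mul])

lemma combMap_apply {n : ℕ} (h : Fin n → R) (a : Fin n → R) :
    combMap K h a = ∑ i, a i * h i := rfl

include K

/-- Every ideal of a Noetherian Banach algebra over a nontrivially normed field is closed. -/
theorem isClosed_ideal [IsNoetherianRing R] (I : Ideal R) : IsClosed (I : Set R) := by
  let J : Submodule R R := I.topologicalClosure
  have hIJ : I ≤ J := Submodule.le_topologicalClosure I
  have hJclosed : IsClosed (J : Set R) := Submodule.isClosed_topologicalClosure I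
  suffices hsub : (J : Set R) ⊆ (I : Set R) by
    have : (I : Set R) = (J : Set R) := Set.Subset.antisymm hIJ hsub
    rw [this]; exact hJclosed
  -- generators of J
  obtain ⟨n, h, hspan⟩ := Submodule.fg_iff_exists_fin_generating_family.mp
    (IsNoetherian.noetherian J)
  have hhJ : ∀ i, h i ∈ J := fun i => hspan ▸ Submodule.subset_span (Set.mem_range_self i)
  -- the restriction of scalars of J
  let Jc : Submodule K R := J.restrictScalars K
  have hJc : IsClosed (Jc : Set R) := hJclosed
  haveI : CompleteSpace Jc := hJc.completeSpace_coe
  let T : (Fin n → R) →L[K] R := combMap K h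
  have hTmem : ∀ a, T a ∈ Jc := fun a => by
    have : ∑ i, a i * h i ∈ J :=
      Submodule.sum_mem J fun i _ => by simpa [smul_eq_mul] using J.smul_mem (a i) (hhJ i)
    simpa [Jc, Submodule.restrictScalars_mem, T, combMap_apply] using this
  let T' : (Fin n → R) →L[K] Jc := T.codRestrict Jc hTmem
  have hsurj : Function.Surjective T' := by
    rintro ⟨y, hy⟩
    have hy' : y ∈ J := hy
    rw [← hspan] at hy'
    obtain ⟨c, hc⟩ := (Submodule.mem_span_range_iff_exists_fun R).mp hy'
    refine ⟨c, Subtype.ext ?_⟩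
    simpa [T', T, combMap_apply, smul_eq_mul] using hc
  obtain ⟨C, hC0, hC⟩ := ContinuousLinearMap.exists_preimage_norm_le T' hsurj
  -- approximate generators inside I
  set δ : ℝ := 1 / (2 * C * (n + 1)) with hδdef
  have hδ0 : 0 < δ := by positivity
  have happrox : ∀ i, ∃ g : R, g ∈ I ∧ ‖h i - g‖ < δ := by
    intro i
    have : h i ∈ closure (I : Set R) := by
      have h2 : h i ∈ (J : Set R) := hhJ i
      rwa [Submodule.topologicalClosure_coe] at h2
    obtain ⟨g, hgI, hgd⟩ := Metric.mem_closure_iff.mp this δ hδ0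
    exact ⟨g, hgI, by rwa [← dist_eq_norm]⟩
  choose h' hh'I hh'd using happrox
  let T₂ : (Fin n → R) →L[K] R := combMap K h'
  -- key approximation step
  have key : ∀ w : R, w ∈ J → ∃ a : Fin n → R,
      ‖a‖ ≤ C * ‖w‖ ∧ (w - T₂ a) ∈ J ∧ ‖w - T₂ a‖ ≤ ‖w‖ / 2 := by
    intro w hw
    obtain ⟨a, ha, hanorm⟩ := hC ⟨w, hw⟩
    have hTa : T a = w := congrArg Subtype.val ha
    have hanorm' : ‖a‖ ≤ C * ‖w‖ := hanorm
    refine ⟨a, hanorm', ?_, ?_⟩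
    · have hT₂I : T₂ a ∈ I := by
        show ∑ i, a i * h' i ∈ I
        exact Ideal.sum_mem I fun i _ => I.mul_mem_left (a i) (hh'I i)
      exact Submodule.sub_mem _ hw (hIJ hT₂I)
    · have hdiff : w - T₂ a = ∑ i, a i * (h i - h' i) := by
        rw [← hTa]
        simp only [T, T₂, combMap_apply, mul_sub, Finset.sum_sub_distrib]
      rw [hdiff]
      calc ‖∑ i, a i * (h i - h' i)‖ ≤ ∑ i, ‖a i * (h i - h' i)‖ := norm_sum_le _ _
        _ ≤ ∑ _i : Fin n, ‖a‖ * δ := by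
            refine Finset.sum_le_sum fun i _ => ?_
            calc ‖a i * (h i - h' i)‖ ≤ ‖a i‖ * ‖h i - h' i‖ := norm_mul_le _ _
              _ ≤ ‖a‖ * δ := by
                  refine mul_le_mul (norm_le_pi_norm a i) (hh'd i).le (norm_nonneg _)
                    (norm_nonneg _)
        _ = n * (‖a‖ * δ) := by rw [Finset.sum_const, Finset.card_fin, nsmul_eq_mul]
        _ ≤ n * (C * ‖w‖ * δ) := by
            have : (0:ℝ) ≤ (n:ℝ) := Nat.cast_nonneg n
            gcongr
        _ ≤ ‖w‖ / 2 := by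
            have hkey : (n:ℝ) * C * δ ≤ 1/2 := by
              rw [hδdef]
              have h1 : (n:ℝ) * C * (1 / (2*C*((n:ℝ)+1))) = (n:ℝ)/(((n:ℝ)+1)*2) := by
                rw [eq_div_iff (by positivity)]
                field_simp
              rw [h1, div_le_div_iff₀ (by positivity) (by norm_num)]
              nlinarith [Nat.cast_nonneg (α := ℝ) n]
            calc (n:ℝ) * (C * ‖w‖ * δ) = ((n:ℝ) * C * δ) * ‖w‖ := by ring
              _ ≤ (1/2) * ‖w‖ := mul_le_mul_of_nonneg_right hkey (norm_nonneg w)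
              _ = ‖w‖ / 2 := by ring
  -- iterate
  intro y hyJ
  classical
  choose! a hA1 hA2 hA3 using key
  let step : {w : R // w ∈ J} → {w : R // w ∈ J} :=
    fun w => ⟨w.1 - T₂ (a w.1), hA2 w.1 w.2⟩
  let s : ℕ → {w : R // w ∈ J} := fun k => step^[k] ⟨y, hyJ⟩
  have hs_succ : ∀ k, s (k+1) = step (s k) := fun k => Function.iterate_succ_apply' step k _
  have hs0 : (s 0).1 = y := rfl
  have hsnorm : ∀ k, ‖(s k).1‖ ≤ (1/2)^k * ‖y‖ := by
    intro k
    induction k with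
    | zero => simp [hs0]
    | succ k ih =>
      rw [hs_succ k]
      have : ‖(step (s k)).1‖ ≤ ‖(s k).1‖ / 2 := hA3 (s k).1 (s k).2
      calc ‖(step (s k)).1‖ ≤ ‖(s k).1‖ / 2 := this
        _ ≤ ((1/2)^k * ‖y‖) / 2 := by linarith
        _ = (1/2)^(k+1) * ‖y‖ := by ring
  have hcoeff : ∀ k, ‖a (s k).1‖ ≤ C * ((1/2)^k * ‖y‖) := by
    intro k
    calc ‖a (s k).1‖ ≤ C * ‖(s k).1‖ := hA1 (s k).1 (s k).2
      _ ≤ C * ((1/2)^k * ‖y‖) := by gcongr; exact hsnorm k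
  have hsum : Summable fun k => a (s k).1 := by
    apply Summable.of_norm
    apply Summable.of_nonneg_of_le (fun k => norm_nonneg _) hcoeff
    apply Summable.mul_left
    apply Summable.mul_right
    exact summable_geometric_of_lt_one (by norm_num) (by norm_num)
  have hpartial : ∀ N, ∑ k ∈ Finset.range N, T₂ (a (s k).1) = y - (s N).1 := by
    intro N
    induction N with
    | zero => simp [hs0]
    | succ N ih =>
      rw [Finset.sum_range_succ, ih, hs_succ N]
      show y - (s N).1 + T₂ (a (s N).1) = y - ((s N).1 - T₂ (a (s N).1))
      ring
  -- limits
  have hs_tendsto : Tendsto (fun N => (s N).1) atTop (𝓝 0) := by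
    apply squeeze_zero_norm hsnorm
    have : Tendsto (fun k : ℕ => (1/2:ℝ)^k) atTop (𝓝 0) :=
      tendsto_pow_atTop_nhds_zero_of_lt_one (by norm_num) (by norm_num)
    simpa using this.mul_const ‖y‖
  have hpartial_tendsto : Tendsto (fun N => ∑ k ∈ Finset.range N, T₂ (a (s k).1)) atTop (𝓝 y) := by
    simp only [hpartial]
    simpa using tendsto_const_nhds.sub hs_tendsto
  have hsumT : Summable fun k => T₂ (a (s k).1) := hsum.map T₂ T₂.continuous
  have hTsum : T₂ (∑' k, a (s k).1) = ∑' k, T₂ (a (s k).1) := T₂.map_tsum hsum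
  have : ∑' k, T₂ (a (s k).1) = y :=
    tendsto_nhds_unique hsumT.hasSum.tendsto_sum_nat hpartial_tendsto
  have hyT : y = T₂ (∑' k, a (s k).1) := by rw [hTsum, this]
  rw [hyT]
  show T₂ (∑' k, a (s k).1) ∈ I
  rw [combMap_apply]
  exact Ideal.sum_mem _ fun i _ => I.mul_mem_left _ (hh'I i)

end ClosedIdeal

section MulNorm

variable {K : Type*} [NontriviallyNormedField K]
variable {B : Type*} [NormedCommRing B] [NormedAlgebra K B] [CompleteSpace B]
  [IsNoetherianRing B] [IsDomain B]

/-- The "minimum modulus" of multiplication by `f`. -/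
noncomputable def sig (f : B) : ℝ := ⨅ b : {b : B // b ≠ 0}, ‖f * (b : B)‖ / ‖(b : B)‖

lemma sig_instNonempty : Nonempty {b : B // b ≠ 0} := ⟨⟨1, one_ne_zero⟩⟩

lemma sig_bddBelow (f : B) :
    BddBelow (Set.range fun b : {b : B // b ≠ 0} => ‖f * (b : B)‖ / ‖(b : B)‖) := by
  refine ⟨0, ?_⟩
  rintro r ⟨b, rfl⟩
  positivity

lemma sig_nonneg (f : B) : 0 ≤ sig f := by
  haveI := sig_instNonempty (B := B)
  exact Real.iInf_nonneg fun b => by positivity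

lemma sig_le (f : B) {b : B} (hb : b ≠ 0) : sig f ≤ ‖f * b‖ / ‖b‖ :=
  ciInf_le (sig_bddBelow f) ⟨b, hb⟩

lemma sig_mul_norm_le (f g : B) : sig f * ‖g‖ ≤ ‖f * g‖ := by
  rcases eq_or_ne g 0 with rfl | hg
  · simp
  · have := sig_le f hg
    rw [div_eq_mul_inv] at this
    have hpos : (0:ℝ) < ‖g‖ := norm_pos_iff.mpr hg
    calc sig f * ‖g‖ ≤ ‖f * g‖ * ‖g‖⁻¹ * ‖g‖ := by
          apply mul_le_mul_of_nonneg_right this hpos.le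
      _ = ‖f * g‖ := by field_simp

lemma one_le_sig_one : (1:ℝ) ≤ sig (1 : B) := by
  haveI := sig_instNonempty (B := B)
  refine le_ciInf fun b => ?_
  have hpos : (0:ℝ) < ‖(b : B)‖ := norm_pos_iff.mpr b.2
  rw [one_mul, le_div_iff₀ hpos, one_mul]

lemma sig_mul_sig_le (f g : B) : sig f * sig g ≤ sig (f * g) := by
  haveI := sig_instNonempty (B := B)
  refine le_ciInf fun b => ?_
  have hpos : (0:ℝ) < ‖(b : B)‖ := norm_pos_iff.mpr b.2
  rw [le_div_iff₀ hpos]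
  calc sig f * sig g * ‖(b : B)‖ = sig f * (sig g * ‖(b : B)‖) := by ring
    _ ≤ sig f * ‖g * (b : B)‖ := by
        apply mul_le_mul_of_nonneg_left (sig_mul_norm_le g b) (sig_nonneg f)
    _ ≤ ‖f * (g * (b : B))‖ := sig_mul_norm_le f _
    _ = ‖f * g * (b : B)‖ := by rw [mul_assoc]

lemma sig_pow_le (f : B) (m : ℕ) : sig f ^ m ≤ sig (f ^ m) := by
  induction m with
  | zero => simpa using one_le_sig_one (B := B)
  | succ m ih =>
    calc sig f ^ (m+1) = sig f ^ m * sig f := by ring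
      _ ≤ sig (f ^ m) * sig f := mul_le_mul_of_nonneg_right ih (sig_nonneg f)
      _ ≤ sig (f ^ m * f) := sig_mul_sig_le _ _
      _ = sig (f ^ (m+1)) := by rw [pow_succ]

include K in
lemma sig_pos {f : B} (hf : f ≠ 0) : 0 < sig f := by
  haveI := sig_instNonempty (B := B)
  -- the ideal (f) is closed
  have hclosed : IsClosed ((Ideal.span {f} : Ideal B) : Set B) := isClosed_ideal K _
  let Jc : Submodule K B := (Ideal.span {f}).restrictScalars K
  have hJc : IsClosed (Jc : Set B) := hclosed
  haveI : CompleteSpace Jc := hJc.completeSpace_coe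
  let T : B →L[K] B := ContinuousLinearMap.mul K B f
  have hTmem : ∀ b, T b ∈ Jc := fun b => by
    have : f * b ∈ Ideal.span {f} := Ideal.mul_mem_right b _ (Ideal.mem_span_singleton_self f)
    simpa [Jc, T] using this
  let T' : B →L[K] Jc := T.codRestrict Jc hTmem
  have hsurj : Function.Surjective T' := by
    rintro ⟨y, hy⟩
    have hy' : y ∈ Ideal.span {f} := hy
    obtain ⟨a, ha⟩ := Ideal.mem_span_singleton'.mp hy'
    refine ⟨a, Subtype.ext ?_⟩
    show f * a = y
    rw [mul_comm]; exact ha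
  obtain ⟨C, hC0, hC⟩ := ContinuousLinearMap.exists_preimage_norm_le T' hsurj
  have hlow : ∀ b : B, ‖b‖ ≤ C * ‖f * b‖ := by
    intro b
    obtain ⟨x, hx, hxn⟩ := hC ⟨f * b, hTmem b⟩
    have hfx : f * x = f * b := congrArg Subtype.val hx
    have hxb : x = b := mul_left_cancel₀ hf hfx
    rw [hxb] at hxn
    exact hxn
  have hCinv : (0:ℝ) < C⁻¹ := inv_pos.mpr hC0
  refine lt_of_lt_of_le hCinv ?_
  refine le_ciInf fun b => ?_
  have hpos : (0:ℝ) < ‖(b : B)‖ := norm_pos_iff.mpr b.2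
  rw [le_div_iff₀ hpos, inv_mul_le_iff₀ hC0]
  exact hlow b

lemma sig_zero : sig (0 : B) = 0 := by
  haveI := sig_instNonempty (B := B)
  have h1 : sig (0:B) ≤ 0 := by
    have := sig_le (0:B) (one_ne_zero (α := B))
    simpa using this
  exact le_antisymm h1 (sig_nonneg 0)

end MulNorm

section Rho

variable {K : Type*} [NontriviallyNormedField K]
variable {B : Type*} [NormedCommRing B] [NormedAlgebra K B] [CompleteSpace B]
  [IsNoetherianRing B] [IsDomain B]

lemma norm_pow_pos {x : B} (hx : x ≠ 0) (n : ℕ) : 0 < ‖x ^ n‖ :=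
  norm_pos_iff.mpr (pow_ne_zero n hx)

lemma subadd_log (x : B) (hx : x ≠ 0) : Subadditive fun n => Real.log ‖x ^ n‖ := by
  intro m n
  have h1 : ‖x ^ (m + n)‖ ≤ ‖x ^ m‖ * ‖x ^ n‖ := by
    rw [pow_add]; exact norm_mul_le _ _
  calc Real.log ‖x ^ (m+n)‖ ≤ Real.log (‖x ^ m‖ * ‖x ^ n‖) :=
        Real.log_le_log (norm_pow_pos hx _) h1
    _ = Real.log ‖x ^ m‖ + Real.log ‖x ^ n‖ :=
        Real.log_mul (norm_pow_pos hx m).ne' (norm_pow_pos hx n).ne'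

include K in
lemma log_div_bddBelow (x : B) (hx : x ≠ 0) :
    BddBelow (Set.range fun n : ℕ => Real.log ‖x ^ n‖ / (n:ℝ)) := by
  refine ⟨min (Real.log (sig x)) 0, ?_⟩
  rintro r ⟨n, rfl⟩
  rcases Nat.eq_zero_or_pos n with rfl | hn
  · simp
  · have hsig : 0 < sig x := sig_pos (K := K) hx
    have hone : (1:ℝ) ≤ ‖(1:B)‖ := by
      have h0 : (0:ℝ) < ‖(1:B)‖ := norm_pos_iff.mpr one_ne_zero
      have h2 : ‖(1:B)‖ ≤ ‖(1:B)‖ * ‖(1:B)‖ := by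
        calc ‖(1:B)‖ = ‖(1:B) * 1‖ := by rw [mul_one]
          _ ≤ ‖(1:B)‖ * ‖(1:B)‖ := norm_mul_le _ _
      nlinarith
    have hpow : sig x ^ n ≤ ‖x ^ n‖ := by
      calc sig x ^ n ≤ sig (x ^ n) := sig_pow_le x n
        _ ≤ sig (x ^ n) * ‖(1:B)‖ := le_mul_of_one_le_right (sig_nonneg _) hone
        _ ≤ ‖x ^ n * 1‖ := sig_mul_norm_le _ _
        _ = ‖x ^ n‖ := by rw [mul_one]
    have hlog : (n:ℝ) * Real.log (sig x) ≤ Real.log ‖x ^ n‖ := by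
      rw [← Real.log_pow]
      exact Real.log_le_log (by positivity) hpow
    have hdiv : Real.log (sig x) ≤ Real.log ‖x ^ n‖ / (n:ℝ) := by
      rw [le_div_iff₀ (by exact_mod_cast hn)]
      linarith [hlog, mul_comm (n:ℝ) (Real.log (sig x))]
    exact le_trans (min_le_left _ _) hdiv

open scoped Classical in
/-- The spectral radius `lim ‖x^n‖^(1/n)`. -/
noncomputable def rho (x : B) : ℝ :=
  if hx : x = 0 then 0 else Real.exp ((subadd_log x hx).lim)

lemma rho_zero : rho (0 : B) = 0 := by
  rw [rho]
  exact dif_pos rfl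

lemma rho_pos {x : B} (hx : x ≠ 0) : 0 < rho x := by
  rw [rho, dif_neg hx]
  exact Real.exp_pos _

lemma rho_nonneg (x : B) : 0 ≤ rho x := by
  rcases eq_or_ne x 0 with rfl | hx
  · rw [rho_zero]
  · exact (rho_pos hx).le

include K in
lemma rho_tendsto {x : B} (hx : x ≠ 0) :
    Filter.Tendsto (fun n : ℕ => ‖x ^ n‖ ^ ((n:ℝ)⁻¹)) Filter.atTop (𝓝 (rho x)) := by
  have h := (subadd_log x hx).tendsto_lim (log_div_bddBelow (K := K) x hx)
  have h2 := (Real.continuous_exp.tendsto _).comp h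
  rw [rho, dif_neg hx]
  refine h2.congr' ?_
  filter_upwards [eventually_ge_atTop 1] with n hn
  show Real.exp (Real.log ‖x ^ n‖ / (n:ℝ)) = ‖x ^ n‖ ^ ((n:ℝ)⁻¹)
  rw [Real.rpow_def_of_pos (norm_pow_pos hx n), div_eq_mul_inv]

lemma tendsto_rpow_inv_one {c : ℝ} (hc : 0 < c) :
    Filter.Tendsto (fun n : ℕ => c ^ ((n:ℝ)⁻¹)) Filter.atTop (𝓝 1) := by
  have h : Filter.Tendsto (fun n : ℕ => Real.log c * (n:ℝ)⁻¹) Filter.atTop (𝓝 0) := by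
    simpa [div_eq_mul_inv] using tendsto_const_div_atTop_nhds_zero_nat (Real.log c)
  have h2 := (Real.continuous_exp.tendsto _).comp h
  simp only [Function.comp_def, Real.exp_zero] at h2
  refine h2.congr fun n => ?_
  rw [Real.rpow_def_of_pos hc]

include K in
lemma rho_le_norm (x : B) : rho x ≤ ‖x‖ := by
  rcases eq_or_ne x 0 with rfl | hx
  · simp [rho_zero]
  · refine le_of_tendsto (rho_tendsto (K := K) hx) ?_
    filter_upwards [eventually_ge_atTop 1] with n hn
    have h1 : ‖x ^ n‖ ≤ ‖x‖ ^ n := norm_pow_le' x hn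
    calc ‖x ^ n‖ ^ ((n:ℝ)⁻¹) ≤ (‖x‖ ^ n) ^ ((n:ℝ)⁻¹) :=
          Real.rpow_le_rpow (norm_nonneg _) h1 (by positivity)
      _ = ‖x‖ := Real.pow_rpow_inv_natCast (norm_nonneg x) (by omega)

include K in
lemma rho_one : rho (1 : B) = 1 := by
  have h1 : Filter.Tendsto (fun n : ℕ => ‖(1:B) ^ n‖ ^ ((n:ℝ)⁻¹)) Filter.atTop (𝓝 1) := by
    have := tendsto_rpow_inv_one (c := ‖(1:B)‖) (norm_pos_iff.mpr one_ne_zero)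
    exact this.congr fun n => by rw [one_pow]
  exact tendsto_nhds_unique (rho_tendsto (K := K) one_ne_zero) h1

include K in
lemma rho_mul_le (x y : B) : rho (x * y) ≤ rho x * rho y := by
  rcases eq_or_ne x 0 with rfl | hx
  · simp [rho_zero]
  rcases eq_or_ne y 0 with rfl | hy
  · simp [rho_zero]
  have hxy : x * y ≠ 0 := mul_ne_zero hx hy
  refine le_of_tendsto_of_tendsto' (rho_tendsto (K := K) hxy)
    ((rho_tendsto (K := K) hx).mul (rho_tendsto (K := K) hy)) fun n => ?_
  have h1 : ‖(x*y) ^ n‖ ≤ ‖x ^ n‖ * ‖y ^ n‖ := by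
    rw [mul_pow]; exact norm_mul_le _ _
  calc ‖(x*y) ^ n‖ ^ ((n:ℝ)⁻¹) ≤ (‖x ^ n‖ * ‖y ^ n‖) ^ ((n:ℝ)⁻¹) :=
        Real.rpow_le_rpow (norm_nonneg _) h1 (by positivity)
    _ = ‖x ^ n‖ ^ ((n:ℝ)⁻¹) * ‖y ^ n‖ ^ ((n:ℝ)⁻¹) :=
        Real.mul_rpow (norm_nonneg _) (norm_nonneg _)

include K in
lemma rho_sig_le (x y : B) : sig x * rho y ≤ rho (x * y) := by
  rcases eq_or_ne x 0 with rfl | hx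
  · simp [sig_zero, rho_nonneg]
  rcases eq_or_ne y 0 with rfl | hy
  · simp [rho_zero, rho_nonneg]
  have hxy : x * y ≠ 0 := mul_ne_zero hx hy
  refine le_of_tendsto_of_tendsto (tendsto_const_nhds.mul (rho_tendsto (K := K) hy))
    (rho_tendsto (K := K) hxy) ?_
  filter_upwards [eventually_ge_atTop 1] with n hn
  have hterm : sig x ^ n * ‖y ^ n‖ ≤ ‖(x * y) ^ n‖ := by
    calc sig x ^ n * ‖y ^ n‖ ≤ sig (x ^ n) * ‖y ^ n‖ :=
          mul_le_mul_of_nonneg_right (sig_pow_le x n) (norm_nonneg _)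
      _ ≤ ‖x ^ n * y ^ n‖ := sig_mul_norm_le _ _
      _ = ‖(x * y) ^ n‖ := by rw [mul_pow]
  show sig x * ‖y ^ n‖ ^ ((n:ℝ)⁻¹) ≤ ‖(x*y) ^ n‖ ^ ((n:ℝ)⁻¹)
  calc sig x * ‖y ^ n‖ ^ ((n:ℝ)⁻¹)
      = (sig x ^ n) ^ ((n:ℝ)⁻¹) * ‖y ^ n‖ ^ ((n:ℝ)⁻¹) := by
        rw [Real.pow_rpow_inv_natCast (sig_nonneg x) (by omega)]
    _ = (sig x ^ n * ‖y ^ n‖) ^ ((n:ℝ)⁻¹) :=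
        (Real.mul_rpow (pow_nonneg (sig_nonneg x) n) (norm_nonneg _)).symm
    _ ≤ ‖(x*y) ^ n‖ ^ ((n:ℝ)⁻¹) :=
        Real.rpow_le_rpow (mul_nonneg (pow_nonneg (sig_nonneg x) n) (norm_nonneg _)) hterm
          (by positivity)

include K in
lemma rho_neg (x : B) : rho (-x) = rho x := by
  rcases eq_or_ne x 0 with rfl | hx
  · rw [neg_zero]
  have hnx : -x ≠ 0 := neg_ne_zero.mpr hx
  have heq : ∀ n : ℕ, ‖(-x) ^ n‖ = ‖x ^ n‖ := fun n => by
    rcases Nat.even_or_odd n with he | ho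
    · rw [he.neg_pow]
    · rw [ho.neg_pow, norm_neg]
  refine tendsto_nhds_unique (rho_tendsto (K := K) hnx) ?_
  exact (rho_tendsto (K := K) hx).congr fun n => by rw [heq n]

include K in
lemma rho_powMul : IsPowMul (rho (B := B)) := by
  intro a n hn
  rcases eq_or_ne a 0 with rfl | ha
  · rw [zero_pow (by omega), rho_zero, zero_pow (by omega)]
  have han : a ^ n ≠ 0 := pow_ne_zero n ha
  have hmono : Filter.Tendsto (fun k : ℕ => n * k) Filter.atTop Filter.atTop := by
    apply Filter.tendsto_atTop_atTop_of_monotone (fun _ _ h => Nat.mul_le_mul_left n h)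
    exact fun b => ⟨b, Nat.le_mul_of_pos_left b (by omega)⟩
  have hsub : Filter.Tendsto (fun k : ℕ => ‖a ^ (n * k)‖ ^ (((n * k : ℕ):ℝ)⁻¹))
      Filter.atTop (𝓝 (rho a)) := (rho_tendsto (K := K) ha).comp hmono
  have hsubn : Filter.Tendsto (fun k : ℕ => (‖a ^ (n * k)‖ ^ (((n * k : ℕ):ℝ)⁻¹)) ^ n)
      Filter.atTop (𝓝 (rho a ^ n)) := hsub.pow n
  refine tendsto_nhds_unique ?_ hsubn
  refine (rho_tendsto (K := K) han).congr fun k => ?_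
  rw [← pow_mul]
  rcases Nat.eq_zero_or_pos k with rfl | hk
  · simp
  have hnk : ((n * k : ℕ):ℝ) ≠ 0 := by positivity
  rw [← Real.rpow_natCast (‖a ^ (n*k)‖ ^ (((n*k:ℕ):ℝ)⁻¹)) n, ← Real.rpow_mul (norm_nonneg _)]
  congr 1
  push_cast
  field_simp

lemma exists_D {x : B} {t : ℝ} (ht : 0 < t)
    (hev : ∀ᶠ k in Filter.atTop, ‖x ^ k‖ ≤ t ^ k) :
    ∃ D : ℝ, 1 ≤ D ∧ ∀ k : ℕ, ‖x ^ k‖ ≤ D * t ^ k := by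
  obtain ⟨N, hN⟩ := Filter.eventually_atTop.mp hev
  have hbdd : BddAbove ((fun k => ‖x ^ k‖ / t ^ k) '' Set.Iio N) :=
    ((Set.finite_Iio N).image _).bddAbove
  obtain ⟨M, hM⟩ := hbdd
  refine ⟨max 1 M, le_max_left _ _, fun k => ?_⟩
  rcases lt_or_ge k N with hk | hk
  · have h1 : ‖x ^ k‖ / t ^ k ≤ M := hM ⟨k, hk, rfl⟩
    have h2 : ‖x ^ k‖ ≤ M * t ^ k := by rwa [div_le_iff₀ (by positivity)] at h1
    calc ‖x ^ k‖ ≤ M * t ^ k := h2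
      _ ≤ max 1 M * t ^ k := by gcongr; exact le_max_right _ _
  · calc ‖x ^ k‖ ≤ t ^ k := hN k hk
      _ ≤ max 1 M * t ^ k := le_mul_of_one_le_left (by positivity) (le_max_left 1 M)

lemma binom_bound (hB1 : ‖(1:B)‖ = 1) (hna : IsNonarchimedean fun b : B => ‖b‖)
    {x y : B} {D₁ D₂ t : ℝ} (ht : 0 < t) (hD1 : 1 ≤ D₁) (hD2 : 1 ≤ D₂)
    (hx : ∀ k, ‖x ^ k‖ ≤ D₁ * t ^ k) (hy : ∀ k, ‖y ^ k‖ ≤ D₂ * t ^ k) (n : ℕ) :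
    ‖(x + y) ^ n‖ ≤ D₁ * D₂ * t ^ n := by
  haveI : NormOneClass B := ⟨hB1⟩
  haveI : IsUltrametricDist B := IsUltrametricDist.isUltrametricDist_of_isNonarchimedean_norm hna
  have hD1' : (0:ℝ) < D₁ := lt_of_lt_of_le one_pos hD1
  have hD2' : (0:ℝ) < D₂ := lt_of_lt_of_le one_pos hD2
  rw [add_pow]
  refine IsUltrametricDist.norm_sum_le_of_forall_le_of_nonneg
    (by positivity) fun k hk => ?_
  have hkn : k ≤ n := Nat.le_of_lt_succ (Finset.mem_range.mp hk)
  calc ‖x ^ k * y ^ (n - k) * (n.choose k : B)‖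
      ≤ ‖x ^ k * y ^ (n-k)‖ * ‖(n.choose k : B)‖ := norm_mul_le _ _
    _ ≤ ‖x ^ k * y ^ (n-k)‖ * 1 := by
        have := IsUltrametricDist.norm_natCast_le_one B (n.choose k)
        exact mul_le_mul_of_nonneg_left this (norm_nonneg _)
    _ = ‖x ^ k * y ^ (n-k)‖ := mul_one _
    _ ≤ ‖x ^ k‖ * ‖y ^ (n-k)‖ := norm_mul_le _ _
    _ ≤ (D₁ * t ^ k) * (D₂ * t ^ (n-k)) :=
        mul_le_mul (hx k) (hy (n-k)) (norm_nonneg _) (by positivity)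
    _ = D₁ * D₂ * (t ^ k * t ^ (n-k)) := by ring
    _ = D₁ * D₂ * t ^ n := by rw [← pow_add, Nat.add_sub_cancel' hkn]

include K in
lemma rho_nonarch (hB1 : ‖(1:B)‖ = 1) (hna : IsNonarchimedean fun b : B => ‖b‖) (x y : B) :
    rho (x + y) ≤ max (rho x) (rho y) := by
  rcases eq_or_ne x 0 with rfl | hx
  · rw [zero_add]; exact le_max_right _ _
  rcases eq_or_ne y 0 with rfl | hy
  · rw [add_zero]; exact le_max_left _ _
  rcases eq_or_ne (x + y) 0 with hxy | hxy
  · rw [hxy, rho_zero]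
    exact le_max_of_le_left (rho_nonneg x)
  refine le_of_forall_pos_le_add fun ε hε => ?_
  set t := max (rho x) (rho y) + ε with ht
  have htpos : 0 < t := by
    have := rho_pos hx
    have h2 : rho x ≤ max (rho x) (rho y) := le_max_left _ _
    simp only [ht]
    nlinarith
  have hxt : rho x < t := by
    have : rho x ≤ max (rho x) (rho y) := le_max_left _ _
    simp only [ht]; linarith
  have hyt : rho y < t := by
    have : rho y ≤ max (rho x) (rho y) := le_max_right _ _
    simp only [ht]; linarith
  have hevx : ∀ᶠ k in Filter.atTop, ‖x ^ k‖ ≤ t ^ k := by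
    filter_upwards [(rho_tendsto (K := K) hx).eventually_lt_const hxt,
      eventually_ge_atTop 1] with k hk hk1
    calc ‖x ^ k‖ = (‖x ^ k‖ ^ ((k:ℝ)⁻¹)) ^ k :=
          (Real.rpow_inv_natCast_pow (norm_nonneg _) (by omega)).symm
      _ ≤ t ^ k := pow_le_pow_left₀ (Real.rpow_nonneg (norm_nonneg _) _) hk.le k
  have hevy : ∀ᶠ k in Filter.atTop, ‖y ^ k‖ ≤ t ^ k := by
    filter_upwards [(rho_tendsto (K := K) hy).eventually_lt_const hyt,
      eventually_ge_atTop 1] with k hk hk1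
    calc ‖y ^ k‖ = (‖y ^ k‖ ^ ((k:ℝ)⁻¹)) ^ k :=
          (Real.rpow_inv_natCast_pow (norm_nonneg _) (by omega)).symm
      _ ≤ t ^ k := pow_le_pow_left₀ (Real.rpow_nonneg (norm_nonneg _) _) hk.le k
  obtain ⟨D₁, hD11, hD1⟩ := exists_D htpos hevx
  obtain ⟨D₂, hD21, hD2⟩ := exists_D htpos hevy
  have hbin := binom_bound hB1 hna htpos hD11 hD21 hD1 hD2
  have hD12 : (0:ℝ) < D₁ * D₂ := by nlinarith
  have hlim : Filter.Tendsto (fun n : ℕ => (D₁ * D₂) ^ ((n:ℝ)⁻¹) * t) Filter.atTop (𝓝 t) := by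
    simpa using (tendsto_rpow_inv_one hD12).mul_const t
  refine le_of_tendsto_of_tendsto (rho_tendsto (K := K) hxy) hlim ?_
  filter_upwards [eventually_ge_atTop 1] with n hn
  show ‖(x+y) ^ n‖ ^ ((n:ℝ)⁻¹) ≤ (D₁ * D₂) ^ ((n:ℝ)⁻¹) * t
  calc ‖(x+y) ^ n‖ ^ ((n:ℝ)⁻¹) ≤ (D₁ * D₂ * t ^ n) ^ ((n:ℝ)⁻¹) :=
        Real.rpow_le_rpow (norm_nonneg _) (hbin n) (by positivity)
    _ = (D₁ * D₂) ^ ((n:ℝ)⁻¹) * (t ^ n) ^ ((n:ℝ)⁻¹) :=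
        Real.mul_rpow hD12.le (by positivity)
    _ = (D₁ * D₂) ^ ((n:ℝ)⁻¹) * t := by
        rw [Real.pow_rpow_inv_natCast htpos.le (by omega)]

end Rho

section SSet

variable {K : Type*} [NontriviallyNormedField K]
variable {B : Type*} [NormedCommRing B] [NormedAlgebra K B] [CompleteSpace B]
  [IsNoetherianRing B] [IsDomain B]

/-- The admissible family of seminorms. -/
def memS (φ : B → ℝ) : Prop :=
  (∀ x, 0 ≤ φ x) ∧ φ 1 = 1 ∧ (∀ x, φ x ≤ rho x) ∧ (∀ x, φ (-x) = φ x) ∧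
  (∀ x y, φ (x + y) ≤ max (φ x) (φ y)) ∧ (∀ x y, φ (x * y) ≤ φ x * φ y) ∧
  (∀ x y, sig x * φ y ≤ φ (x * y)) ∧ IsPowMul φ

include K in
lemma memS_rho (hB1 : ‖(1:B)‖ = 1) (hna : IsNonarchimedean fun b : B => ‖b‖) :
    memS (rho (B := B)) :=
  ⟨rho_nonneg, rho_one (K := K), fun _ => le_rfl, rho_neg (K := K),
    rho_nonarch (K := K) hB1 hna, rho_mul_le (K := K), rho_sig_le (K := K), rho_powMul (K := K)⟩

lemma le_mul_of_forall_eps {a b c : ℝ} (hb : 0 ≤ b) (hc : 0 ≤ c)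
    (h : ∀ ε : ℝ, 0 < ε → a ≤ (b + ε) * (c + ε)) : a ≤ b * c := by
  have h1 : Filter.Tendsto (fun k : ℕ => (1:ℝ)/(k+1)) Filter.atTop (𝓝 0) :=
    tendsto_one_div_add_atTop_nhds_zero_nat
  have hbt : Filter.Tendsto (fun k : ℕ => b + 1/(k+1)) Filter.atTop (𝓝 (b + 0)) :=
    tendsto_const_nhds.add h1
  have hct : Filter.Tendsto (fun k : ℕ => c + 1/(k+1)) Filter.atTop (𝓝 (c + 0)) :=
    tendsto_const_nhds.add h1
  have hten : Filter.Tendsto (fun k : ℕ => (b + 1/(k+1)) * (c + 1/(k+1)))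
      Filter.atTop (𝓝 (b * c)) := by
    simpa using hbt.mul hct
  exact ge_of_tendsto' hten fun k => h _ (by positivity)

lemma le_pow_of_forall_eps {a b : ℝ} (n : ℕ) (_hb : 0 ≤ b)
    (h : ∀ ε : ℝ, 0 < ε → a ≤ (b + ε) ^ n) : a ≤ b ^ n := by
  have h1 : Filter.Tendsto (fun k : ℕ => (1:ℝ)/(k+1)) Filter.atTop (𝓝 0) :=
    tendsto_one_div_add_atTop_nhds_zero_nat
  have hbt : Filter.Tendsto (fun k : ℕ => b + 1/(k+1)) Filter.atTop (𝓝 (b + 0)) :=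
    tendsto_const_nhds.add h1
  have hten : Filter.Tendsto (fun k : ℕ => (b + 1/(k+1)) ^ n) Filter.atTop (𝓝 (b ^ n)) := by
    simpa using hbt.pow n
  exact ge_of_tendsto' hten fun k => h _ (by positivity)

include K in
lemma exists_minimal_memS (hB1 : ‖(1:B)‖ = 1) (hna : IsNonarchimedean fun b : B => ‖b‖) :
    ∃ φ : B → ℝ, memS φ ∧ ∀ ψ : B → ℝ, memS ψ → (∀ x, ψ x ≤ φ x) → ψ = φ := by
  set s : Set ((B → ℝ)ᵒᵈ) := {φ | memS (OrderDual.ofDual φ)} with hs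
  have hzorn : ∀ c ⊆ s, IsChain (· ≤ ·) c → ∀ y ∈ c, ∃ ub ∈ s, ∀ z ∈ c, z ≤ ub := by
    intro c hcs hchain y hy
    haveI : Nonempty c := ⟨⟨y, hy⟩⟩
    set Φ : B → ℝ := fun x => ⨅ ψ : c, OrderDual.ofDual ψ.1 x with hΦ
    have hmem : ∀ ψ : c, memS (OrderDual.ofDual ψ.1) := fun ψ => hcs ψ.2
    have hbdd : ∀ x, BddBelow (Set.range fun ψ : c => OrderDual.ofDual ψ.1 x) := by
      intro x
      refine ⟨0, ?_⟩
      rintro r ⟨ψ, rfl⟩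
      exact (hmem ψ).1 x
    have hle : ∀ (ψ : c) (x : B), Φ x ≤ OrderDual.ofDual ψ.1 x := fun ψ x =>
      ciInf_le (hbdd x) ψ
    have hround : ∀ (x : B) (ε : ℝ), 0 < ε → ∃ ψ : c, OrderDual.ofDual ψ.1 x < Φ x + ε := by
      intro x ε hε
      exact exists_lt_of_ciInf_lt (lt_add_of_pos_right _ hε)
    have hnonneg : ∀ x, 0 ≤ Φ x := fun x => Real.iInf_nonneg fun ψ => (hmem ψ).1 x
    -- a common minorant in the chain for two elements
    have hmin2 : ∀ ψ₁ ψ₂ : c, ∃ ψ : c,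
        (∀ x, OrderDual.ofDual ψ.1 x ≤ OrderDual.ofDual ψ₁.1 x) ∧
        (∀ x, OrderDual.ofDual ψ.1 x ≤ OrderDual.ofDual ψ₂.1 x) := by
      intro ψ₁ ψ₂
      rcases eq_or_ne ψ₁ ψ₂ with rfl | hne
      · exact ⟨ψ₁, fun x => le_rfl, fun x => le_rfl⟩
      rcases hchain ψ₁.2 ψ₂.2 (fun h => hne (Subtype.ext h)) with h | h
      · exact ⟨ψ₂, fun x => h x, fun x => le_rfl⟩
      · exact ⟨ψ₁, fun x => le_rfl, fun x => h x⟩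
    have hΦS : memS Φ := by
      refine ⟨hnonneg, ?_, ?_, ?_, ?_, ?_, ?_, ?_⟩
      · have : (fun ψ : c => OrderDual.ofDual ψ.1 (1:B)) = fun _ => (1:ℝ) :=
          funext fun ψ => (hmem ψ).2.1
        rw [hΦ]
        show (⨅ ψ : c, OrderDual.ofDual ψ.1 (1:B)) = 1
        rw [this, ciInf_const]
      · intro x
        exact ciInf_le_of_le (hbdd x) ⟨y, hy⟩ ((hcs hy).2.2.1 x)
      · intro x
        exact iInf_congr fun ψ => (hmem ψ).2.2.2.1 x
      · intro x z
        refine le_of_forall_pos_le_add fun ε hε => ?_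
        obtain ⟨ψ₁, h1⟩ := hround x ε hε
        obtain ⟨ψ₂, h2⟩ := hround z ε hε
        obtain ⟨ψ, hψ1, hψ2⟩ := hmin2 ψ₁ ψ₂
        calc Φ (x + z) ≤ OrderDual.ofDual ψ.1 (x + z) := hle ψ _
          _ ≤ max (OrderDual.ofDual ψ.1 x) (OrderDual.ofDual ψ.1 z) := (hmem ψ).2.2.2.2.1 x z
          _ ≤ max (Φ x + ε) (Φ z + ε) := by
              apply max_le_max
              · exact (hψ1 x).trans (le_of_lt ((h1).trans_le le_rfl))
              · exact (hψ2 z).trans (le_of_lt ((h2).trans_le le_rfl))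
          _ = max (Φ x) (Φ z) + ε := max_add_add_right _ _ _
      · intro x z
        refine le_mul_of_forall_eps (hnonneg x) (hnonneg z) fun ε hε => ?_
        obtain ⟨ψ₁, h1⟩ := hround x ε hε
        obtain ⟨ψ₂, h2⟩ := hround z ε hε
        obtain ⟨ψ, hψ1, hψ2⟩ := hmin2 ψ₁ ψ₂
        calc Φ (x * z) ≤ OrderDual.ofDual ψ.1 (x * z) := hle ψ _
          _ ≤ OrderDual.ofDual ψ.1 x * OrderDual.ofDual ψ.1 z := (hmem ψ).2.2.2.2.2.1 x z
          _ ≤ (Φ x + ε) * (Φ z + ε) := by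
              apply mul_le_mul ((hψ1 x).trans h1.le) ((hψ2 z).trans h2.le) ((hmem ψ).1 z)
              have := hnonneg x
              linarith
      · intro x z
        refine le_ciInf fun ψ => ?_
        calc sig x * Φ z ≤ sig x * OrderDual.ofDual ψ.1 z :=
              mul_le_mul_of_nonneg_left (hle ψ z) (sig_nonneg x)
          _ ≤ OrderDual.ofDual ψ.1 (x * z) := (hmem ψ).2.2.2.2.2.2.1 x z
      · intro a n hn
        refine le_antisymm ?_ ?_
        · refine le_pow_of_forall_eps n (hnonneg a) fun ε hε => ?_
          obtain ⟨ψ, hψ⟩ := hround a ε hε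
          calc Φ (a ^ n) ≤ OrderDual.ofDual ψ.1 (a ^ n) := hle ψ _
            _ = (OrderDual.ofDual ψ.1 a) ^ n := (hmem ψ).2.2.2.2.2.2.2 a hn
            _ ≤ (Φ a + ε) ^ n := pow_le_pow_left₀ ((hmem ψ).1 a) hψ.le n
        · refine le_ciInf fun ψ => ?_
          calc Φ a ^ n ≤ (OrderDual.ofDual ψ.1 a) ^ n :=
                pow_le_pow_left₀ (hnonneg a) (hle ψ a) n
            _ = OrderDual.ofDual ψ.1 (a ^ n) := ((hmem ψ).2.2.2.2.2.2.2 a hn).symm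
    refine ⟨OrderDual.toDual Φ, hΦS, ?_⟩
    intro z hz
    show Φ ≤ OrderDual.ofDual z
    intro x
    exact hle ⟨z, hz⟩ x
  obtain ⟨m, _, hmS, hmax⟩ := zorn_le_nonempty₀ s hzorn (OrderDual.toDual (rho (B := B)))
    (memS_rho (K := K) hB1 hna)
  refine ⟨OrderDual.ofDual m, hmS, ?_⟩
  intro ψ hψ hle
  have h1 : m ≤ OrderDual.toDual ψ := fun x => hle x
  have h2 := hmax hψ h1
  exact le_antisymm hle fun x => h2 x

include K in
lemma memS_mul {φ : B → ℝ} (hφ : memS φ)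
    (hmin : ∀ ψ : B → ℝ, memS ψ → (∀ x, ψ x ≤ φ x) → ψ = φ) (x y : B) :
    φ (x * y) = φ x * φ y := by
  obtain ⟨h1, h2, h3, h4, h5, h6, h7, h8⟩ := hφ
  have hφ0 : φ 0 = 0 := le_antisymm (by simpa [rho_zero] using h3 0) (h1 0)
  rcases eq_or_ne x 0 with rfl | hx
  · rw [zero_mul, hφ0, zero_mul]
  have hφx : 0 < φ x := by
    have h := h7 x 1
    rw [mul_one, h2, mul_one] at h
    exact lt_of_lt_of_le (sig_pos (K := K) hx) h
  let f : RingSeminorm B :=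
    { toFun := φ
      map_zero' := hφ0
      add_le' := fun a b => (h5 a b).trans (max_le_add_of_nonneg (h1 a) (h1 b))
      neg' := h4
      mul_le' := h6 }
  have hf1 : f 1 ≤ 1 := le_of_eq h2
  have hfc : f x ≠ 0 := ne_of_gt hφx
  have hfpm : IsPowMul (⇑f) := h8
  have hψle : ∀ z, seminormFromConst' x f z ≤ φ z := fun z =>
    seminormFromConst_le_seminorm hf1 hfc hfpm z
  have hψS : memS (seminormFromConst' x f) := by
    refine ⟨?_, ?_, ?_, ?_, ?_, ?_, ?_, ?_⟩
    · intro z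
      exact apply_nonneg (seminormFromConst hf1 hfc hfpm) z
    · exact seminormFromConst_one hf1 hfc hfpm
    · intro z
      exact (hψle z).trans (h3 z)
    · intro z
      exact map_neg_eq_map (seminormFromConst hf1 hfc hfpm) z
    · intro a b
      exact seminormFromConst_isNonarchimedean hf1 hfc hfpm (fun r t => h5 r t) a b
    · intro a b
      exact map_mul_le_mul (seminormFromConst hf1 hfc hfpm) a b
    · intro a b
      have hlim1 := seminormFromConst_isLimit hf1 hfc hfpm (a * b)
      have hlim2 := (seminormFromConst_isLimit hf1 hfc hfpm b).const_mul (sig a)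
      refine le_of_tendsto_of_tendsto' hlim2 hlim1 fun n => ?_
      simp only [seminormFromConst_seq]
      have hpos : (0:ℝ) < f x ^ n := pow_pos hφx n
      have hterm : sig a * f (b * x ^ n) ≤ f (a * b * x ^ n) := by
        have h := h7 a (b * x ^ n)
        show sig a * φ (b * x ^ n) ≤ φ (a * b * x ^ n)
        rwa [← mul_assoc] at h
      calc sig a * (f (b * x ^ n) / f x ^ n) = (sig a * f (b * x ^ n)) / f x ^ n := by ring
        _ ≤ f (a * b * x ^ n) / f x ^ n :=
            (div_le_div_iff_of_pos_right hpos).mpr hterm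
    · exact seminormFromConst_isPowMul hf1 hfc hfpm
  have hψφ : seminormFromConst' x f = φ := hmin _ hψS hψle
  have hc := seminormFromConst_const_mul hf1 hfc hfpm y
  calc φ (x * y) = seminormFromConst' x f (x * y) := by rw [hψφ]
    _ = seminormFromConst' x f x * seminormFromConst' x f y := hc
    _ = φ x * φ y := by rw [hψφ]

include K in
theorem exists_mul_norm (hB1 : ‖(1:B)‖ = 1) (hna : IsNonarchimedean fun b : B => ‖b‖) :
    ∃ φ : B → ℝ, (∀ x, 0 ≤ φ x) ∧ φ 1 = 1 ∧ (∀ x y, φ (x + y) ≤ max (φ x) (φ y)) ∧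
      (∀ x y, φ (x * y) = φ x * φ y) ∧ (∀ x, φ x ≤ ‖x‖) ∧ ∀ x : B, x ≠ 0 → 0 < φ x := by
  obtain ⟨φ, hφ, hmin⟩ := exists_minimal_memS (K := K) hB1 hna
  have hmul := memS_mul (K := K) hφ hmin
  obtain ⟨h1, h2, h3, h4, h5, h6, h7, h8⟩ := hφ
  refine ⟨φ, h1, h2, h5, hmul, ?_, ?_⟩
  · intro z
    exact (h3 z).trans (rho_le_norm (K := K) z)
  · intro z hz
    have h := h7 z 1
    rw [mul_one, h2, mul_one] at h
    exact lt_of_lt_of_le (sig_pos (K := K) hz) h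

end SSet

/-- A bounded multiplicative (nonarchimedean) seminorm on a seminormed commutative ring. -/
structure IsBddMulSeminorm {A : Type*} [SeminormedCommRing A] (φ : A → ℝ) : Prop where
  nonneg : ∀ f, 0 ≤ φ f
  map_zero : φ 0 = 0
  map_one : φ 1 = 1
  map_neg : ∀ f, φ (-f) = φ f
  nonarch : ∀ f g, φ (f + g) ≤ max (φ f) (φ g)
  mul_eq : ∀ f g, φ (f * g) = φ f * φ g
  bounded : ∃ C > 0, ∀ f, φ f ≤ C * ‖f‖

/-- In a Noetherian Banach algebra over a nonarchimedean field every prime ideal is the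
kernel of some bounded multiplicative seminorm. -/
theorem prime_is_kernel_of_bddMulSeminorm {K A : Type*}
    [NontriviallyNormedField K] [CompleteSpace K]
    (hK : IsNonarchimedean (fun x : K => ‖x‖))
    [NormedCommRing A] [NormOneClass A] [NormedAlgebra K A] [CompleteSpace A]
    (hA : IsNonarchimedean (fun a : A => ‖a‖))
    [IsNoetherianRing A] :
    ∀ p : Ideal A, p.IsPrime →
      ∃ φ : A → ℝ, IsBddMulSeminorm φ ∧ ∀ f, f ∈ p ↔ φ f = 0 := by
  intro p hp
  haveI := hp
  have hpc : IsClosed (p : Set A) := isClosed_ideal K p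
  haveI : IsClosed ((p : Set A)) := hpc
  haveI : IsDomain (A ⧸ p) := Ideal.Quotient.isDomain p
  haveI : IsNoetherianRing (A ⧸ p) :=
    isNoetherianRing_of_surjective A _ (Ideal.Quotient.mk p) Ideal.Quotient.mk_surjective
  have hB1 : ‖(1 : A ⧸ p)‖ = 1 := by
    have hle : ‖(1 : A ⧸ p)‖ ≤ 1 := by
      have h := Ideal.Quotient.norm_mk_le p (1 : A)
      rw [map_one] at h
      calc ‖(1 : A ⧸ p)‖ ≤ ‖(1 : A)‖ := h
        _ = 1 := norm_one
    have hpos : 0 < ‖(1 : A ⧸ p)‖ := norm_pos_iff.mpr one_ne_zero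
    have hgeq : ‖(1 : A ⧸ p)‖ ≤ ‖(1 : A ⧸ p)‖ * ‖(1 : A ⧸ p)‖ := by
      calc ‖(1 : A ⧸ p)‖ = ‖(1 : A ⧸ p) * 1‖ := by rw [mul_one]
        _ ≤ _ := norm_mul_le _ _
    nlinarith
  have hBna : IsNonarchimedean fun b : A ⧸ p => ‖b‖ := by
    intro x y
    refine le_of_forall_pos_le_add fun ε hε => ?_
    obtain ⟨a, ha, han⟩ := Ideal.Quotient.norm_mk_lt x hε
    obtain ⟨b, hb, hbn⟩ := Ideal.Quotient.norm_mk_lt y hε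
    have hxy : x + y = Ideal.Quotient.mk p (a + b) := by rw [map_add, ha, hb]
    calc ‖x + y‖ = ‖Ideal.Quotient.mk p (a + b)‖ := by rw [hxy]
      _ ≤ ‖a + b‖ := Ideal.Quotient.norm_mk_le p (a + b)
      _ ≤ max ‖a‖ ‖b‖ := hA a b
      _ ≤ max (‖x‖ + ε) (‖y‖ + ε) := max_le_max han.le hbn.le
      _ = max ‖x‖ ‖y‖ + ε := max_add_add_right _ _ _
  obtain ⟨φ, h1, h2, h5, hmul, hbd, hpos⟩ := exists_mul_norm (K := K) (B := A ⧸ p) hB1 hBna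
  have hφ0 : φ 0 = 0 := by
    have h := hbd 0
    rw [norm_zero] at h
    exact le_antisymm h (h1 0)
  have hφneg1 : φ (-1) = 1 := by
    have h := hmul (-1 : A ⧸ p) (-1)
    rw [neg_mul_neg, one_mul, h2] at h
    rcases mul_self_eq_one_iff.mp h.symm with h' | h'
    · exact h'
    · exfalso
      have := h1 (-1 : A ⧸ p)
      rw [h'] at this
      linarith
  refine ⟨fun f => φ (Ideal.Quotient.mk p f), ?_, ?_⟩
  · refine ⟨fun f => h1 _, ?_, ?_, ?_, ?_, ?_, ?_⟩
    · rw [map_zero]; exact hφ0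
    · rw [map_one]; exact h2
    · intro f
      rw [map_neg, neg_eq_neg_one_mul, hmul, hφneg1, one_mul]
    · intro f g
      rw [map_add]; exact h5 _ _
    · intro f g
      rw [map_mul]; exact hmul _ _
    · refine ⟨1, one_pos, fun f => ?_⟩
      rw [one_mul]
      exact (hbd _).trans (Ideal.Quotient.norm_mk_le p f)
  · intro f
    constructor
    · intro hf
      show φ (Ideal.Quotient.mk p f) = 0
      rw [(Ideal.Quotient.eq_zero_iff_mem).mpr hf]
      exact hφ0
    · intro hf
      by_contra hfp
      have hne : Ideal.Quotient.mk p f ≠ 0 := fun h =>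
        hfp ((Ideal.Quotient.eq_zero_iff_mem).mp h)
      have hf' : φ (Ideal.Quotient.mk p f) = 0 := hf
      exact (ne_of_gt (hpos _ hne)) hf'
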